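/- arXiv:1807.03080 — 3 statements merged into one kernel-verified Lean document; each statement's English description precedes it below -/
import Mathlib

section
/- Let A be a unital C*-algebra, n ∈ ℕ, and x₁, …, xₙ ∈ A elements satisfying ∑_{i=1}^n xᵢ*xᵢ = 1 and ∑_{i=1}^n xᵢxᵢ* = 1. Fix an index i. Suppose that for every index j ≠ i such that x_j is not normal, one has xᵢx_j = x_jxᵢ and xᵢ*x_j = x_jxᵢ*. Then xᵢ is normal. -/
section KS

variable {A : Type*} [Ring A]

/-- The inner derivation `x ↦ a*x - x*a`. -/
private def dd (a x : A) : A := a * x - x * a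

private lemma dd_mul (a x y : A) : dd a (x * y) = dd a x * y + x * dd a y := by
  simp only [dd]
  noncomm_ring

private lemma dd_add (a x y : A) : dd a (x + y) = dd a x + dd a y := by
  simp only [dd]
  noncomm_ring

private lemma dd_nsmul (a : A) (m : ℕ) (x : A) : dd a (m • x) = m • dd a x := by
  simp only [dd, smul_sub, mul_smul_comm, smul_mul_assoc]

private lemma dd_of_commute {a c : A} (h : Commute a c) : dd a c = 0 := by
  simp [dd, h.eq]

variable (a b : A) (hd : Commute a (dd a b))

include hd in
private lemma dd_key (m n : ℕ) :
    (dd a)^[m + 1] (b ^ (n + 1)) =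
      b * (dd a)^[m + 1] (b ^ n) + (m + 1) • (dd a b * (dd a)^[m] (b ^ n)) := by
  induction m with
  | zero =>
    simp only [zero_add, Function.iterate_one, Function.iterate_zero, id_eq, one_smul,
      pow_succ']
    rw [dd_mul]
    abel
  | succ m ih =>
    rw [Function.iterate_succ_apply' (dd a) (m + 1), ih, dd_add, dd_mul, dd_nsmul, dd_mul,
      dd_of_commute hd, zero_mul, zero_add,
      ← Function.iterate_succ_apply' (dd a) (m + 1) (b ^ n),
      ← Function.iterate_succ_apply' (dd a) m (b ^ n),
      succ_nsmul (dd a b * (dd a)^[m + 1] (b ^ n)) (m + 1)]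
    abel

include hd in
private lemma dd_main : ∀ n : ℕ, (dd a)^[n] (b ^ n) = n.factorial • (dd a b) ^ n := by
  intro n
  induction n with
  | zero => simp
  | succ n ih =>
    have h1 : (dd a)^[n + 1] (b ^ n) = 0 := by
      rw [Function.iterate_succ_apply', ih, dd_nsmul, dd_of_commute (hd.pow_right n), smul_zero]
    rw [dd_key a b hd, h1, mul_zero, zero_add, ih, mul_smul_comm, smul_smul,
      ← pow_succ', Nat.factorial_succ]

end KS

section Norm

variable {A : Type*} [NormedRing A]

private lemma dd_norm_le (a x : A) : ‖dd a x‖ ≤ 2 * ‖a‖ * ‖x‖ := by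
  calc ‖a * x - x * a‖ ≤ ‖a * x‖ + ‖x * a‖ := norm_sub_le _ _
    _ ≤ ‖a‖ * ‖x‖ + ‖x‖ * ‖a‖ := add_le_add (norm_mul_le _ _) (norm_mul_le _ _)
    _ = 2 * ‖a‖ * ‖x‖ := by ring

private lemma dd_iter_norm_le (a x : A) (m : ℕ) :
    ‖(dd a)^[m] x‖ ≤ (2 * ‖a‖) ^ m * ‖x‖ := by
  induction m with
  | zero => simp
  | succ m ih =>
    rw [Function.iterate_succ_apply']
    calc ‖dd a ((dd a)^[m] x)‖ ≤ 2 * ‖a‖ * ‖(dd a)^[m] x‖ := dd_norm_le _ _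
      _ ≤ 2 * ‖a‖ * ((2 * ‖a‖) ^ m * ‖x‖) := by
          apply mul_le_mul_of_nonneg_left ih
          positivity
      _ = (2 * ‖a‖) ^ (m + 1) * ‖x‖ := by ring

end Norm

/-- Kleinecke–Shirokov for self-adjoint commutators in a C*-algebra:
if `a*b - b*a` is self-adjoint and commutes with `a`, then it vanishes. -/
private lemma ks_commutator_eq_zero {A : Type*} [CStarAlgebra A] (a b : A)
    (hd : Commute a (a * b - b * a)) (hsa : IsSelfAdjoint (a * b - b * a)) :
    a * b = b * a := by
  rw [← sub_eq_zero]
  have hdef : a * b - b * a = dd a b := rfl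
  rw [hdef] at hd ⊢
  rw [hdef] at hsa
  -- the factorial bound
  have hbound : ∀ m : ℕ, 0 < m → (m.factorial : ℝ) * ‖dd a b ^ m‖ ≤ (2 * ‖a‖ * ‖b‖) ^ m := by
    intro m hm
    have h1 : (dd a)^[m] (b ^ m) = m.factorial • dd a b ^ m := dd_main a b hd m
    have h2 : ‖(dd a)^[m] (b ^ m)‖ ≤ (2 * ‖a‖) ^ m * ‖b ^ m‖ := dd_iter_norm_le a _ m
    have h4 : ‖(m.factorial • dd a b ^ m : A)‖ = (m.factorial : ℝ) * ‖dd a b ^ m‖ := by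
      rw [← Nat.cast_smul_eq_nsmul ℝ, norm_smul, Real.norm_natCast]
    calc (m.factorial : ℝ) * ‖dd a b ^ m‖ = ‖(dd a)^[m] (b ^ m)‖ := by rw [h1, h4]
      _ ≤ (2 * ‖a‖) ^ m * ‖b ^ m‖ := h2
      _ ≤ (2 * ‖a‖) ^ m * ‖b‖ ^ m :=
          mul_le_mul_of_nonneg_left (norm_pow_le' b hm) (by positivity)
      _ = (2 * ‖a‖ * ‖b‖) ^ m := by rw [← mul_pow]
  -- norms of powers of the self-adjoint element d
  have hdpow : ∀ k : ℕ, ‖dd a b ^ 2 ^ k‖ = ‖dd a b‖ ^ 2 ^ k := by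
    intro k
    simpa [coe_nnnorm] using congrArg NNReal.toReal (hsa.nnnorm_pow_two_pow k)
  -- conclude ‖dd a b‖ = 0
  have hnorm : ‖dd a b‖ = 0 := by
    by_contra hne
    have hc : (0 : ℝ) < ‖dd a b‖ := lt_of_le_of_ne (norm_nonneg _) (Ne.symm hne)
    set K : ℝ := 2 * ‖a‖ * ‖b‖ with hK
    have hfac : ∀ k : ℕ, (((2 ^ k : ℕ).factorial : ℝ)) ≤ (K / ‖dd a b‖) ^ 2 ^ k := by
      intro k
      have h := hbound (2 ^ k) (by positivity)
      rw [hdpow k] at h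
      rw [div_pow, le_div_iff₀ (by positivity)]
      exact h
    have htend : Filter.Tendsto (fun m : ℕ => (K / ‖dd a b‖) ^ m / (m.factorial : ℝ))
        Filter.atTop (nhds 0) :=
      (Real.summable_pow_div_factorial (K / ‖dd a b‖)).tendsto_atTop_zero
    have hev := htend.eventually (eventually_lt_nhds (by norm_num : (0:ℝ) < 1))
    obtain ⟨N, hN⟩ := Filter.eventually_atTop.mp hev
    have hNle : N ≤ 2 ^ N := (Nat.lt_two_pow_self (n := N)).le
    have h5 := hN (2 ^ N) hNle
    have h6 : (K / ‖dd a b‖) ^ 2 ^ N < (((2 ^ N : ℕ).factorial : ℝ)) := by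
      have hfpos : (0 : ℝ) < (((2 ^ N : ℕ).factorial : ℝ)) := by
        exact_mod_cast Nat.factorial_pos _
      exact (div_lt_one hfpos).mp h5
    exact absurd (hfac N) (not_le.mpr h6)
  exact norm_eq_zero.mp hnorm

open Finset in
/-- Lemma 2.1 (2): if `x₁, …, xₙ` satisfy the noncommutative complex sphere
relations `∑ xᵢ* xᵢ = ∑ xᵢ xᵢ* = 1`, and `xᵢ` commutes and star-commutes with
every non-normal `xⱼ` (`j ≠ i`), then `xᵢ` is normal. -/
theorem normal_of_commutes_with_nonnormal {A : Type*} [CStarAlgebra A]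
    {n : ℕ} (x : Fin n → A)
    (hsum₁ : ∑ i, star (x i) * x i = 1)
    (hsum₂ : ∑ i, x i * star (x i) = 1)
    (i : Fin n)
    (hcomm : ∀ j : Fin n, j ≠ i → ¬(star (x j) * x j = x j * star (x j)) →
      x i * x j = x j * x i ∧ star (x i) * x j = x j * star (x i)) :
    star (x i) * x i = x i * star (x i) := by
  classical
  -- `x i` commutes with each term of the defect sum
  have hterm : ∀ j ∈ univ.erase i,
      Commute (x i) (x j * star (x j) - star (x j) * x j) := by
    intro j hj
    have hji : j ≠ i := (mem_erase.mp hj).1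
    by_cases hnor : star (x j) * x j = x j * star (x j)
    · rw [hnor, sub_self]
      exact Commute.zero_right _
    · obtain ⟨h1, h2⟩ := hcomm j hji hnor
      have c1 : Commute (x i) (x j) := h1
      have c2 : Commute (x i) (star (x j)) := by
        have h3 := congrArg star h2
        simp only [star_mul, star_star] at h3
        exact h3.symm
      exact (c1.mul_right c2).sub_right (c2.mul_right c1)
  -- splitting the sphere relations at index i
  have e1 : star (x i) * x i + ∑ j ∈ univ.erase i, star (x j) * x j = 1 :=
    (Finset.add_sum_erase univ (fun j => star (x j) * x j) (mem_univ i)).trans hsum₁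
  have e2 : x i * star (x i) + ∑ j ∈ univ.erase i, x j * star (x j) = 1 :=
    (Finset.add_sum_erase univ (fun j => x j * star (x j)) (mem_univ i)).trans hsum₂
  have h1' : ∑ j ∈ univ.erase i, star (x j) * x j = 1 - star (x i) * x i := by
    rw [← e1]; abel
  have h2' : ∑ j ∈ univ.erase i, x j * star (x j) = 1 - x i * star (x i) := by
    rw [← e2]; abel
  have hsplit : star (x i) * x i - x i * star (x i)
      = ∑ j ∈ univ.erase i, (x j * star (x j) - star (x j) * x j) := by
    rw [Finset.sum_sub_distrib, h1', h2']
    abel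
  have hcd : Commute (x i) (star (x i) * x i - x i * star (x i)) := by
    rw [hsplit]
    exact Commute.sum_right _ _ _ hterm
  have hcd' : Commute (x i) (x i * star (x i) - star (x i) * x i) := by
    have := hcd.neg_right
    rwa [neg_sub] at this
  have hsa : IsSelfAdjoint (x i * star (x i) - star (x i) * x i) := by
    simp only [IsSelfAdjoint, star_sub, star_mul, star_star]
  exact (ks_commutator_eq_zero (x i) (star (x i)) hcd' hsa).symm
end

section
/- Let a = E₃₁ + (√2/2)E₄₄ and b = E₂₁ + E₃₂ + (√2/2)E₄₄ in M₄(ℂ). Then the pair (a, b*) satisfies: a*a + bb* = 1, aa* + b*b = 1, a*b* = b*a*, and ab = (1/2)E₄₄ ≠ 0. In particular, the assignment x₁ ↦ a, x₂ ↦ b* satisfies the noncommutative complex sphere relations ∑ xᵢ*xᵢ = ∑ xᵢxᵢ* = 1 and x₁*x₂ = x₂x₁*, while x₁x₂* ≠ 0. -/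
open Matrix

/-- The matrix `a = E₃₁ + (√2/2) E₄₄` from Remark 2.2. -/
noncomputable def remA : Matrix (Fin 4) (Fin 4) ℂ :=
  Matrix.single 2 0 1 + Matrix.single 3 3 ((Real.sqrt 2 / 2 : ℝ) : ℂ)

/-- The matrix `b = E₂₁ + E₃₂ + (√2/2) E₄₄` from Remark 2.2. -/
noncomputable def remB : Matrix (Fin 4) (Fin 4) ℂ :=
  Matrix.single 1 0 1 + Matrix.single 2 1 1 +
    Matrix.single 3 3 ((Real.sqrt 2 / 2 : ℝ) : ℂ)

lemma hsq_sphere : ((Real.sqrt 2 : ℝ) : ℂ) ^ 2 = 2 := by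
  rw [← Complex.ofReal_pow, Real.sq_sqrt (by norm_num)]
  norm_num

set_option maxHeartbeats 1000000 in
/-- The pair `(x₁, x₂) = (a, b*)` satisfies the noncommutative complex sphere
relations `x₁*x₁ + x₂*x₂ = 1`, `x₁x₁* + x₂x₂* = 1`, the star-commutation
relation `x₁*x₂ = x₂x₁*` (i.e. `a*b* = b*a*`), while `x₁x₂* = ab = (1/2)E₄₄`
is nonzero. -/
theorem sphere_relations_a_bstar :
    star remA * remA + remB * star remB = 1 ∧
    remA * star remA + star remB * remB = 1 ∧
    star remA * star remB = star remB * star remA ∧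
    remA * remB = Matrix.single 3 3 ((1 : ℂ) / 2) ∧
    remA * remB ≠ 0 := by
  have key : remA * remB = Matrix.single 3 3 ((1 : ℂ) / 2) := by
    ext i j
    fin_cases i <;> fin_cases j <;>
      simp [remA, remB, mul_apply, Fin.sum_univ_four, Matrix.single]
    all_goals (ring_nf; simp [hsq_sphere]; try norm_num)
  refine ⟨?_, ?_, ?_, key, ?_⟩
  · ext i j
    fin_cases i <;> fin_cases j <;>
      simp [remA, remB, mul_apply, Fin.sum_univ_four, Matrix.single,
        Matrix.one_apply, conjTranspose_apply, Complex.conj_ofReal, map_ofNat]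
    all_goals (ring_nf; simp [hsq_sphere]; try norm_num)
  · ext i j
    fin_cases i <;> fin_cases j <;>
      simp [remA, remB, mul_apply, Fin.sum_univ_four, Matrix.single,
        Matrix.one_apply, conjTranspose_apply, Complex.conj_ofReal, map_ofNat]
    all_goals (ring_nf; simp [hsq_sphere]; try norm_num)
  · ext i j
    fin_cases i <;> fin_cases j <;>
      simp [remA, remB, mul_apply, Fin.sum_univ_four, Matrix.single,
        Matrix.one_apply, conjTranspose_apply, Complex.conj_ofReal, map_ofNat]
  · rw [key]
    intro h
    have := congrFun (congrFun h 3) 3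
    simp [Matrix.single] at this
end

section
/- There exist a unital C*-algebra A and elements v_{ij} ∈ A (i, j ∈ {1, 2}) such that each v_{ij} is self-adjoint, the 2×2 matrix v = (v_{ij}) over A is orthogonal in the sense that ∑_k v_{ik}v_{jk} = δ_{ij}·1 and ∑_k v_{ki}v_{kj} = δ_{ij}·1 for all i, j, and the two elements v₁₁v₂₁ and v₂₁v₁₁ are linearly independent over ℂ. -/
/-- A bundled unital C*-algebra, used to state an existential quantification
over unital C*-algebras. -/
structure BundledCStarAlgebra where
  carrier : Type
  [inst : CStarAlgebra carrier]

attribute [instance] BundledCStarAlgebra.inst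

/-- The matrix model: `v = [[cp, sp], [-sq, cq]]` with `c = 3/5`, `s = 4/5`,
`p = diag(1,-1)`, `q = [[3/5,4/5],[4/5,-3/5]]` symmetries. -/
noncomputable def Mm : Fin 2 → Fin 2 → Matrix (Fin 2) (Fin 2) ℂ :=
  ![![!![3/5, 0; 0, -(3/5)], !![4/5, 0; 0, -(4/5)]],
    ![!![-(12/25), -(16/25); -(16/25), 12/25], !![9/25, 12/25; 12/25, -(9/25)]]]

theorem Mm_star : ∀ i j, star (Mm i j) = Mm i j := by
  intro i j
  fin_cases i <;> fin_cases j <;>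
    simp [Mm, Matrix.star_eq_conjTranspose] <;>
    ext a b <;> fin_cases a <;> fin_cases b <;> simp

open Finset in
theorem Mm_row : ∀ i j, ∑ k, Mm i k * Mm j k = if i = j then 1 else 0 := by
  intro i j
  fin_cases i <;> fin_cases j <;>
    simp [Mm, Fin.sum_univ_two, Matrix.mul_fin_two, Matrix.one_fin_two] <;>
    norm_num <;> ext a b <;> fin_cases a <;> fin_cases b <;> simp

open Finset in
theorem Mm_col : ∀ i j, ∑ k, Mm k i * Mm k j = if i = j then 1 else 0 := by
  intro i j
  fin_cases i <;> fin_cases j <;>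
    simp [Mm, Fin.sum_univ_two, Matrix.mul_fin_two, Matrix.one_fin_two] <;>
    norm_num <;> ext a b <;> fin_cases a <;> fin_cases b <;> simp

theorem Mm_li : LinearIndependent ℂ ![Mm 0 0 * Mm 1 0, Mm 1 0 * Mm 0 0] := by
  rw [LinearIndependent.pair_iff]
  intro s t h
  have h1 := Matrix.ext_iff.2 h 0 0
  have h2 := Matrix.ext_iff.2 h 0 1
  simp [Mm, Matrix.mul_fin_two, Matrix.mul_apply, Fin.sum_univ_two] at h1 h2
  refine ⟨?_, ?_⟩
  · linear_combination (-(125:ℂ)/72) * h1 - (125/96) * h2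
  · linear_combination (-(125:ℂ)/72) * h1 + (125/96) * h2

open Finset in
/-- There exist a unital C*-algebra `A` and a `2 × 2` orthogonal matrix
`v = (vᵢⱼ)` of self-adjoint elements of `A` such that `v₁₁v₂₁` and `v₂₁v₁₁`
are linearly independent over `ℂ` (realized by the free quantum orthogonal
group `O₂⁺`). -/
theorem exists_cstar_orthogonal_matrix_linearIndependent :
    ∃ (W : BundledCStarAlgebra) (v : Fin 2 → Fin 2 → W.carrier),
      (∀ i j, star (v i j) = v i j) ∧
      (∀ i j, ∑ k, v i k * v j k = if i = j then 1 else 0) ∧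
      (∀ i j, ∑ k, v k i * v k j = if i = j then 1 else 0) ∧
      LinearIndependent ℂ ![v 0 0 * v 1 0, v 1 0 * v 0 0] := by
  classical
  let E := EuclideanSpace ℂ (Fin 2)
  refine ⟨⟨E →L[ℂ] E⟩, fun i j => Matrix.toEuclideanCLM (𝕜 := ℂ) (Mm i j), ?_, ?_, ?_, ?_⟩
  · intro i j
    rw [← map_star, Mm_star]
  · intro i j
    rw [show (∑ k, Matrix.toEuclideanCLM (𝕜 := ℂ) (Mm i k) *
        Matrix.toEuclideanCLM (𝕜 := ℂ) (Mm j k)) =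
        Matrix.toEuclideanCLM (𝕜 := ℂ) (∑ k, Mm i k * Mm j k) by
      simp [map_sum]]
    rw [Mm_row]
    split <;> simp
  · intro i j
    rw [show (∑ k, Matrix.toEuclideanCLM (𝕜 := ℂ) (Mm k i) *
        Matrix.toEuclideanCLM (𝕜 := ℂ) (Mm k j)) =
        Matrix.toEuclideanCLM (𝕜 := ℂ) (∑ k, Mm k i * Mm k j) by
      simp [map_sum]]
    rw [Mm_col]
    split <;> simp
  · rw [LinearIndependent.pair_iff]
    intro s t h
    have key : Matrix.toEuclideanCLM (𝕜 := ℂ)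
        (s • (Mm 0 0 * Mm 1 0) + t • (Mm 1 0 * Mm 0 0)) = 0 := by
      simpa [map_add, map_smul, map_mul] using h
    have h0 : s • (Mm 0 0 * Mm 1 0) + t • (Mm 1 0 * Mm 0 0) = 0 := by
      have := (Matrix.toEuclideanCLM (𝕜 := ℂ) (n := Fin 2)).injective
        (key.trans (map_zero _).symm)
      exact this
    exact LinearIndependent.pair_iff.1 Mm_li s t h0
end
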